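/- Let r and d be integers with 1 ≤ r < d, and let Z be a random variable with the Beta(r/2, (d−r)/2) distribution, i.e., with density y^{r/2−1}(1−y)^{(d−r)/2−1}/B(r/2, (d−r)/2) on (0,1). Then P(Z ≥ r/(2d)) ≥ 1/12. Equivalently, the regularized incomplete Beta function satisfies 1 − I_{r/(2d)}(r/2, (d−r)/2) ≥ 1/12. -/

import Mathlib

open MeasureTheory ProbabilityTheory Real

noncomputable section

/-- The regularized incomplete Beta function I_x(a,b). -/
def regIncBeta (a b x : ℝ) : ℝ :=
  (∫ y in (0:ℝ)..x, y ^ (a - 1) * (1 - y) ^ (b - 1)) /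
    (Real.Gamma a * Real.Gamma b / Real.Gamma (a + b))


open Set in

lemma cpow_eq (a b y : ℝ) (h0 : 0 ≤ y) (h0' : 0 ≤ 1 - y) :
    (y:ℂ) ^ ((a:ℂ)-1) * ((1:ℂ)-(y:ℂ)) ^ ((b:ℂ)-1)
      = ((y ^ (a-1) * (1-y) ^ (b-1) : ℝ) : ℂ) := by
  have e1 : (y:ℂ) ^ ((a:ℂ)-1) = ((y ^ (a-1) : ℝ) : ℂ) := by
    rw [Complex.ofReal_cpow h0]; push_cast; ring_nf
  have e2 : ((1:ℂ)-(y:ℂ)) ^ ((b:ℂ)-1) = (((1-y) ^ (b-1) : ℝ) : ℂ) := by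
    rw [Complex.ofReal_cpow h0']; push_cast; ring_nf
  rw [e1, e2, ← Complex.ofReal_mul]

lemma betaInt (a b : ℝ) (ha : 0 < a) (hb : 0 < b) :
    IntegrableOn (fun y : ℝ => y ^ (a-1) * (1-y) ^ (b-1)) (Set.Ioo (0:ℝ) 1) := by
  have hc : IntervalIntegrable (fun y : ℝ => (y:ℂ) ^ ((a:ℂ)-1) * ((1:ℂ)-y) ^ ((b:ℂ)-1))
      volume 0 1 := by
    have := Complex.betaIntegral_convergent (u := a) (v := b) (by simpa) (by simpa)
    simpa using this
  have h1 : IntegrableOn (fun y : ℝ => ((y:ℂ) ^ ((a:ℂ)-1) * ((1:ℂ)-y) ^ ((b:ℂ)-1)).re)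
      (Set.Ioc (0:ℝ) 1) := hc.1.re
  have h2 : IntegrableOn (fun y : ℝ => y ^ (a-1) * (1-y) ^ (b-1)) (Set.Ioc (0:ℝ) 1) := by
    refine h1.congr_fun ?_ measurableSet_Ioc
    intro y hy
    show ((y:ℂ) ^ ((a:ℂ)-1) * ((1:ℂ)-(y:ℂ)) ^ ((b:ℂ)-1)).re = y ^ (a-1) * (1-y) ^ (b-1)
    rw [cpow_eq a b y (le_of_lt hy.1) (by linarith [hy.2]), Complex.ofReal_re]
  exact h2.mono_set Set.Ioo_subset_Ioc_self

lemma betaVal (a b : ℝ) (ha : 0 < a) (hb : 0 < b) :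
    ∫ y in Set.Ioo (0:ℝ) 1, y ^ (a-1) * (1-y) ^ (b-1)
      = Real.Gamma a * Real.Gamma b / Real.Gamma (a+b) := by
  have key : ((∫ y in Set.Ioo (0:ℝ) 1, y ^ (a-1) * (1-y) ^ (b-1) : ℝ) : ℂ)
      = Complex.betaIntegral a b := by
    rw [← MeasureTheory.integral_Ioc_eq_integral_Ioo,
      ← intervalIntegral.integral_of_le (zero_le_one), ← intervalIntegral.integral_ofReal]
    unfold Complex.betaIntegral
    refine intervalIntegral.integral_congr ?_
    intro y hy
    rw [Set.uIcc_of_le zero_le_one] at hy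
    exact (cpow_eq a b y hy.1 (by linarith [hy.2])).symm
  have hG := Complex.Gamma_mul_Gamma_eq_betaIntegral (s := (a:ℂ)) (t := (b:ℂ))
      (by simpa) (by simpa)
  rw [← key] at hG
  have hab : Real.Gamma (a+b) ≠ 0 := (Real.Gamma_pos_of_pos (by linarith)).ne'
  have h2 : Real.Gamma a * Real.Gamma b
      = Real.Gamma (a+b) * ∫ y in Set.Ioo (0:ℝ) 1, y ^ (a-1) * (1-y) ^ (b-1) := by
    apply Complex.ofReal_injective
    push_cast
    rw [← Complex.Gamma_ofReal, ← Complex.Gamma_ofReal, ← Complex.Gamma_ofReal]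
    push_cast
    exact hG
  field_simp
  linarith [h2]

lemma momentInt (a b : ℝ) (k : ℕ) (ha : 0 < a) (hb : 0 < b) :
    IntegrableOn (fun y : ℝ => y ^ (k:ℕ) * (y ^ (a-1) * (1-y) ^ (b-1))) (Set.Ioo (0:ℝ) 1) := by
  refine (betaInt (a + k) b (by positivity) hb).congr_fun ?_ measurableSet_Ioo
  intro y hy
  show y ^ (a + k - 1) * (1-y) ^ (b-1) = y ^ (k:ℕ) * (y ^ (a-1) * (1-y) ^ (b-1))
  rw [show a + k - 1 = (a-1) + k by ring, Real.rpow_add hy.1, Real.rpow_natCast]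
  ring

lemma momentVal (a b : ℝ) (k : ℕ) (ha : 0 < a) (hb : 0 < b) :
    ∫ y in Set.Ioo (0:ℝ) 1, y ^ (k:ℕ) * (y ^ (a-1) * (1-y) ^ (b-1))
      = Real.Gamma (a+k) * Real.Gamma b / Real.Gamma (a+k+b) := by
  rw [← betaVal (a+k) b (by positivity) hb]
  refine setIntegral_congr_fun measurableSet_Ioo ?_
  intro y hy
  show y ^ (k:ℕ) * (y ^ (a-1) * (1-y) ^ (b-1)) = y ^ (a + k - 1) * (1-y) ^ (b-1)
  rw [show a + k - 1 = (a-1) + k by ring, Real.rpow_add hy.1, Real.rpow_natCast]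
  ring

set_option maxHeartbeats 1000000 in
lemma keyIneq (a b : ℝ) (ha : 1/2 ≤ a) (hb : 0 < b) :
    ∫ y in Set.Ioo (0:ℝ) (a/(2*(a+b))), y ^ (a-1) * (1-y) ^ (b-1)
      ≤ 11/12 * (Real.Gamma a * Real.Gamma b / Real.Gamma (a+b)) := by
  have ha0 : 0 < a := by linarith
  have hab : 0 < a + b := by linarith
  set m1 : ℝ := a/(a+b) with hm1def
  have hm1 : 0 < m1 := by positivity
  have hm1lt : m1 < 1 := (div_lt_one hab).2 (by linarith)
  set s : ℝ := 7*m1/2 with hsdef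
  set x : ℝ := a/(2*(a+b)) with hxdef
  have hxm : x = m1/2 := by rw [hxdef, hm1def, div_div]; ring_nf
  have hx0 : 0 < x := by rw [hxm]; linarith
  have hx1 : x < 1 := by rw [hxm]; linarith
  set f : ℝ → ℝ := fun y => y ^ (a-1) * (1-y) ^ (b-1) with hfdef
  have I0 : IntegrableOn f (Set.Ioo (0:ℝ) 1) := betaInt a b ha0 hb
  have J1 : IntegrableOn (fun y => y ^ (1:ℕ) * f y) (Set.Ioo (0:ℝ) 1) := momentInt a b 1 ha0 hb
  have J2 : IntegrableOn (fun y => y ^ (2:ℕ) * f y) (Set.Ioo (0:ℝ) 1) := momentInt a b 2 ha0 hb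
  have hqf_eq : (fun y => ((y-s)/(3*m1))^2 * f y)
      = fun y => (1/(3*m1))^2 * (y ^ (2:ℕ) * f y) - (2*s*(1/(3*m1))^2) * (y ^ (1:ℕ) * f y)
          + (s^2*(1/(3*m1))^2) * f y := by
    funext y; ring
  have hqf : IntegrableOn (fun y => ((y-s)/(3*m1))^2 * f y) (Set.Ioo (0:ℝ) 1) := by
    rw [hqf_eq]
    exact ((J2.const_mul _).sub (J1.const_mul _)).add (I0.const_mul _)
  have fnn : ∀ y ∈ Set.Ioo (0:ℝ) 1, 0 ≤ f y := by
    intro y hy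
    exact mul_nonneg (Real.rpow_nonneg hy.1.le _) (Real.rpow_nonneg (by linarith [hy.2]) _)
  have step1 : ∫ y in Set.Ioo (0:ℝ) x, f y ≤ ∫ y in Set.Ioo (0:ℝ) x, ((y-s)/(3*m1))^2 * f y := by
    refine setIntegral_mono_on (I0.mono_set ?_) (hqf.mono_set ?_) measurableSet_Ioo ?_
    · exact Set.Ioo_subset_Ioo le_rfl hx1.le
    · exact Set.Ioo_subset_Ioo le_rfl hx1.le
    · intro y hy
      have h1 : 3*m1 ≤ s - y := by
        have := hy.2; rw [hxm] at this
        rw [hsdef]; linarith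
      have h2 : (1:ℝ) ≤ ((y-s)/(3*m1))^2 := by
        rw [div_pow, le_div_iff₀ (by positivity)]
        nlinarith
      have h3 : 0 ≤ f y := fnn y ⟨hy.1, lt_trans hy.2 hx1⟩
      nlinarith
  have step2 : ∫ y in Set.Ioo (0:ℝ) x, ((y-s)/(3*m1))^2 * f y
      ≤ ∫ y in Set.Ioo (0:ℝ) 1, ((y-s)/(3*m1))^2 * f y := by
    refine setIntegral_mono_set hqf ?_ (HasSubset.Subset.eventuallyLE (Set.Ioo_subset_Ioo le_rfl hx1.le))
    refine (ae_restrict_iff' measurableSet_Ioo).2 (Filter.Eventually.of_forall ?_)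
    intro y hy
    exact mul_nonneg (sq_nonneg _) (fnn y hy)
  -- compute the moments
  have G0 : 0 < Real.Gamma (a+b) := Real.Gamma_pos_of_pos hab
  set B : ℝ := Real.Gamma a * Real.Gamma b / Real.Gamma (a+b) with hBdef
  have hB : 0 < B := by
    have := Real.Gamma_pos_of_pos ha0
    have := Real.Gamma_pos_of_pos hb
    positivity
  have M0 : ∫ y in Set.Ioo (0:ℝ) 1, f y = B := betaVal a b ha0 hb
  have M1 : ∫ y in Set.Ioo (0:ℝ) 1, y ^ (1:ℕ) * f y = m1 * B := by
    rw [momentVal a b 1 ha0 hb]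
    push_cast
    rw [show a + 1 + b = (a+b) + 1 by ring, Real.Gamma_add_one hab.ne',
      Real.Gamma_add_one ha0.ne', hm1def, hBdef]
    field_simp
  have M2 : ∫ y in Set.Ioo (0:ℝ) 1, y ^ (2:ℕ) * f y = (a*(a+1)/((a+b)*(a+b+1))) * B := by
    rw [momentVal a b 2 ha0 hb]
    push_cast
    rw [show a + 2 + b = ((a+b) + 1) + 1 by ring, Real.Gamma_add_one (by positivity),
      Real.Gamma_add_one hab.ne', show a + (2:ℝ) = (a + 1) + 1 by ring,
      Real.Gamma_add_one (by positivity), Real.Gamma_add_one ha0.ne', hBdef]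
    field_simp
  have step3 : ∫ y in Set.Ioo (0:ℝ) 1, ((y-s)/(3*m1))^2 * f y
      = (1/(3*m1))^2 * ((a*(a+1)/((a+b)*(a+b+1))) * B) - (2*s*(1/(3*m1))^2) * (m1 * B)
          + (s^2*(1/(3*m1))^2) * B := by
    have h1 : Integrable (fun y : ℝ => (1/(3*m1))^2 * (y ^ (2:ℕ) * f y)
        - (2*s*(1/(3*m1))^2) * (y ^ (1:ℕ) * f y)) (volume.restrict (Set.Ioo (0:ℝ) 1)) :=
      (J2.const_mul _).sub (J1.const_mul _)
    have h2 : Integrable (fun y : ℝ => (s^2*(1/(3*m1))^2) * f y)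
        (volume.restrict (Set.Ioo (0:ℝ) 1)) := I0.const_mul _
    have h3 : Integrable (fun y : ℝ => (1/(3*m1))^2 * (y ^ (2:ℕ) * f y))
        (volume.restrict (Set.Ioo (0:ℝ) 1)) := J2.const_mul _
    have h4 : Integrable (fun y : ℝ => (2*s*(1/(3*m1))^2) * (y ^ (1:ℕ) * f y))
        (volume.restrict (Set.Ioo (0:ℝ) 1)) := J1.const_mul _
    rw [hqf_eq, integral_add h1 h2, integral_sub h3 h4,
      integral_const_mul, integral_const_mul, integral_const_mul, M0, M1, M2]
  have hm2 : a*(a+1)/((a+b)*(a+b+1)) ≤ 3*m1^2 := by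
    have hkey : (a+1)*(a+b) ≤ 3*a*(a+b+1) := by nlinarith
    rw [hm1def, div_pow, show 3*(a^2/(a+b)^2) = 3*a^2/(a+b)^2 by ring,
      div_le_div_iff₀ (by positivity) (by positivity)]
    nlinarith [mul_le_mul_of_nonneg_left hkey (mul_pos ha0 hab).le]
  have step4 : (1/(3*m1))^2 * ((a*(a+1)/((a+b)*(a+b+1))) * B) - (2*s*(1/(3*m1))^2) * (m1 * B)
      + (s^2*(1/(3*m1))^2) * B ≤ 11/12 * B := by
    set m2 : ℝ := a*(a+1)/((a+b)*(a+b+1)) with hm2def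
    have h3 : (1/(3*m1))^2 = 1/(9*m1^2) := by rw [div_pow, one_pow]; congr 1; ring
    have e : (1/(3*m1))^2 * (m2 * B) - (2*s*(1/(3*m1))^2) * (m1 * B) + (s^2*(1/(3*m1))^2) * B
        = (m2*B - 2*s*m1*B + s^2*B) / (9*m1^2) := by
      rw [h3]; ring
    rw [e, div_le_iff₀ (by positivity), hsdef]
    nlinarith [mul_nonneg (sub_nonneg.2 hm2) hB.le]
  calc ∫ y in Set.Ioo (0:ℝ) x, f y ≤ _ := step1
    _ ≤ _ := step2
    _ ≤ 11/12 * B := by rw [step3]; exact step4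

/-- If `1 ≤ r < d` and `Z ∼ Beta(r/2, (d−r)/2)`, then
`P(Z ≥ r/(2d)) ≥ 1/12`; equivalently `1 − I_{r/(2d)}(r/2, (d−r)/2) ≥ 1/12`. -/
theorem stmt6 (r d : ℕ) (hr : 1 ≤ r) (hrd : r < d)
    {Ω : Type*} [MeasureSpace Ω] [IsProbabilityMeasure (ℙ : Measure Ω)]
    (Z : Ω → ℝ)
    (hZ : Measure.map Z ℙ =
      (volume.restrict (Set.Ioo (0 : ℝ) 1)).withDensity (fun y =>
        ENNReal.ofReal
          (y ^ ((r : ℝ) / 2 - 1) * (1 - y) ^ (((d : ℝ) - r) / 2 - 1) /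
            (Real.Gamma ((r : ℝ) / 2) * Real.Gamma (((d : ℝ) - r) / 2) /
              Real.Gamma ((r : ℝ) / 2 + ((d : ℝ) - r) / 2))))) :
    ENNReal.ofReal (1 / 12 : ℝ) ≤ ℙ {ω | (r : ℝ) / (2 * d) ≤ Z ω} ∧
      (1 : ℝ) / 12 ≤ 1 - regIncBeta ((r : ℝ) / 2) (((d : ℝ) - r) / 2) ((r : ℝ) / (2 * d)) := by
  set a : ℝ := (r : ℝ) / 2 with hadef
  set b : ℝ := ((d : ℝ) - r) / 2 with hbdef
  have hr1 : (1:ℝ) ≤ (r:ℝ) := by exact_mod_cast hr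
  have hrdR : (r:ℝ) < (d:ℝ) := by exact_mod_cast hrd
  have hd0 : (0:ℝ) < d := by linarith
  have ha : 1/2 ≤ a := by rw [hadef]; linarith
  have ha0 : 0 < a := by linarith
  have hb : 0 < b := by rw [hbdef]; linarith
  have hab : 0 < a + b := by linarith
  set x : ℝ := (r : ℝ) / (2 * d) with hxdef
  have hx : x = a/(2*(a+b)) := by
    have hd' : (d:ℝ) ≠ 0 := hd0.ne'
    rw [hxdef, hadef, hbdef, show (r:ℝ)/2 + ((d:ℝ)-r)/2 = (d:ℝ)/2 by ring]
    field_simp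
  have hx0 : 0 < x := by positivity
  have hx1 : x < 1 := by
    rw [hxdef, div_lt_one (by positivity)]; linarith
  set f : ℝ → ℝ := fun y => y ^ (a-1) * (1-y) ^ (b-1) with hfdef
  set B : ℝ := Real.Gamma a * Real.Gamma b / Real.Gamma (a+b) with hBdef
  have hB : 0 < B := by
    have := Real.Gamma_pos_of_pos ha0
    have := Real.Gamma_pos_of_pos hb
    have := Real.Gamma_pos_of_pos hab
    positivity
  have key : ∫ y in Set.Ioo (0:ℝ) x, f y ≤ 11/12 * B := by
    rw [hx]; exact keyIneq a b ha hb
  have M0 : ∫ y in Set.Ioo (0:ℝ) 1, f y = B := betaVal a b ha0 hb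
  have I0 : IntegrableOn f (Set.Ioo (0:ℝ) 1) := betaInt a b ha0 hb
  -- part 2
  have part2 : (1 : ℝ) / 12 ≤ 1 - regIncBeta a b x := by
    have e1 : regIncBeta a b x = (∫ y in Set.Ioo (0:ℝ) x, f y) / B := by
      rw [regIncBeta, intervalIntegral.integral_of_le hx0.le,
        MeasureTheory.integral_Ioc_eq_integral_Ioo]
    have : regIncBeta a b x ≤ 11/12 := by
      rw [e1, div_le_iff₀ hB]
      linarith [key]
    linarith
  -- part 1
  set g : ℝ → ℝ := fun y => f y / B with hgdef
  have gint : IntegrableOn g (Set.Ioo (0:ℝ) 1) := I0.div_const B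
  have gnn : ∀ y ∈ Set.Ioo (0:ℝ) 1, 0 ≤ g y := by
    intro y hy
    have : 0 ≤ f y :=
      mul_nonneg (Real.rpow_nonneg hy.1.le _) (Real.rpow_nonneg (by linarith [hy.2]) _)
    positivity
  set ν : Measure ℝ := (volume.restrict (Set.Ioo (0 : ℝ) 1)).withDensity
    (fun y => ENNReal.ofReal (g y)) with hνdef
  have hZν : Measure.map Z ℙ = ν := hZ
  have νapp : ∀ t : Set ℝ, MeasurableSet t →
      ν t = ∫⁻ y in t ∩ Set.Ioo (0:ℝ) 1, ENNReal.ofReal (g y) := by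
    intro t ht
    rw [hνdef, withDensity_apply _ ht, Measure.restrict_restrict ht]
  have lint : ∀ t : Set ℝ, MeasurableSet t → t ⊆ Set.Ioo (0:ℝ) 1 →
      ∫⁻ y in t, ENNReal.ofReal (g y) = ENNReal.ofReal (∫ y in t, g y) := by
    intro t ht hsub
    rw [← ofReal_integral_eq_lintegral_ofReal (gint.mono_set hsub)]
    exact (ae_restrict_iff' ht).2 (Filter.Eventually.of_forall (fun y hy => gnn y (hsub hy)))
  have νuniv : ν Set.univ = 1 := by
    rw [νapp Set.univ MeasurableSet.univ, Set.univ_inter,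
      lint _ measurableSet_Ioo (subset_refl _)]
    have : ∫ y in Set.Ioo (0:ℝ) 1, g y = 1 := by
      rw [hgdef]
      simp only
      rw [MeasureTheory.integral_div, M0, div_self hB.ne']
    rw [this, ENNReal.ofReal_one]
  have hAE : AEMeasurable Z ℙ := by
    by_contra h
    rw [Measure.map_of_not_aemeasurable h] at hZν
    rw [← hZν] at νuniv
    simp at νuniv
  have νIio : ν (Set.Iio x) ≤ ENNReal.ofReal (11/12 : ℝ) := by
    have hinter : Set.Iio x ∩ Set.Ioo (0:ℝ) 1 = Set.Ioo (0:ℝ) x := by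
      ext y
      simp only [Set.mem_inter_iff, Set.mem_Iio, Set.mem_Ioo]
      constructor
      · rintro ⟨h1, h2, h3⟩; exact ⟨h2, h1⟩
      · rintro ⟨h1, h2⟩; exact ⟨h2, h1, by linarith⟩
    rw [νapp _ measurableSet_Iio, hinter,
      lint _ measurableSet_Ioo (Set.Ioo_subset_Ioo le_rfl hx1.le)]
    apply ENNReal.ofReal_le_ofReal
    have : ∫ y in Set.Ioo (0:ℝ) x, g y = (∫ y in Set.Ioo (0:ℝ) x, f y) / B := by
      rw [hgdef]; simp only; rw [MeasureTheory.integral_div]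
    rw [this, div_le_iff₀ hB]
    linarith [key]
  have part1 : ENNReal.ofReal (1 / 12 : ℝ) ≤ ℙ {ω | x ≤ Z ω} := by
    have hpre : {ω | x ≤ Z ω} = Z ⁻¹' (Set.Ici x) := rfl
    have hmap : ℙ {ω | x ≤ Z ω} = ν (Set.Ici x) := by
      rw [hpre, ← Measure.map_apply_of_aemeasurable hAE measurableSet_Ici, hZν]
    rw [hmap]
    have hsum : ν (Set.Iio x) + ν (Set.Ici x) = 1 := by
      rw [← measure_union (by exact Set.Iio_disjoint_Ici le_rfl) measurableSet_Ici,
        Set.Iio_union_Ici, νuniv]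
    have h1 : (1:ENNReal) ≤ ν (Set.Ici x) + ENNReal.ofReal (11/12 : ℝ) := by
      rw [← hsum]
      rw [add_comm (ν (Set.Iio x))]
      exact add_le_add le_rfl νIio
    have h2 : ENNReal.ofReal (1 / 12 : ℝ) = 1 - ENNReal.ofReal (11/12 : ℝ) := by
      rw [← ENNReal.ofReal_one, ← ENNReal.ofReal_sub _ (by norm_num)]
      norm_num
    rw [h2]
    exact tsub_le_iff_right.2 h1
  exact ⟨part1, part2⟩


end
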